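/- Call an n×n symmetric integer matrix B a tree matrix if all of its off-diagonal entries lie in {0,1} and the simple graph on {1,…,n} in which distinct i and j are adjacent exactly when B(i,j) = 1 is a tree (connected and acyclic); call two symmetric integer matrices of the same size GL(ℤ)-congruent if one equals PᵀAP for some integer matrix P with det P = ±1; and call a symmetric integer matrix treelike if it is GL(ℤ)-congruent to a tree matrix. Then: for every m ≥ 1 and treelike symmetric integer matrices A₁, …, A_m, the block-diagonal sum A₁ ⊕ ⋯ ⊕ A_m ⊕ H is treelike, where H is the 2×2 matrix with rows (0,1) and (1,0). -/

import Mathlib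

set_option linter.unusedSectionVars false
set_option maxHeartbeats 1000000

open Matrix

/-- A symmetric integer matrix is a *tree matrix* if its off-diagonal entries lie in `{0,1}`
and the simple graph in which distinct `i`, `j` are adjacent exactly when the `(i,j)` entry is
`1` is a tree. -/
def IsTreeMatrix {n : ℕ} (B : Matrix (Fin n) (Fin n) ℤ) : Prop :=
  B.IsSymm ∧ (∀ i j, i ≠ j → B i j = 0 ∨ B i j = 1) ∧
    (SimpleGraph.fromRel fun i j => B i j = 1).IsTree

/-- Two symmetric integer matrices are `GL(ℤ)`-congruent if one equals `Pᵀ A P` for an integer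
matrix `P` with `det P = ±1`. -/
def GLZCongruent {n : ℕ} (A B : Matrix (Fin n) (Fin n) ℤ) : Prop :=
  ∃ P : Matrix (Fin n) (Fin n) ℤ, (P.det = 1 ∨ P.det = -1) ∧ B = Pᵀ * A * P

/-- A symmetric integer matrix is *treelike* if it is `GL(ℤ)`-congruent to a tree matrix. -/
def IsTreelike {n : ℕ} (A : Matrix (Fin n) (Fin n) ℤ) : Prop :=
  ∃ B : Matrix (Fin n) (Fin n) ℤ, IsTreeMatrix B ∧ GLZCongruent A B

/-- The total size of a finite list of square integer matrices. -/
def totalSize (l : List ((n : ℕ) × Matrix (Fin n) (Fin n) ℤ)) : ℕ :=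
  (l.map Sigma.fst).sum

/-- The block-diagonal sum `A₁ ⊕ ⋯ ⊕ A_m` of a list of square integer matrices. -/
def blockSum : (l : List ((n : ℕ) × Matrix (Fin n) (Fin n) ℤ)) →
    Matrix (Fin (totalSize l)) (Fin (totalSize l)) ℤ
  | [] => 0
  | ⟨_, A⟩ :: t =>
    Matrix.reindex (finCongr (by simp [totalSize])) (finCongr (by simp [totalSize]))
      (Matrix.reindex finSumFinEquiv finSumFinEquiv
        (Matrix.fromBlocks A 0 0 (blockSum t)))

namespace TreeAux

open SimpleGraph

variable {α β : Type*}

lemma walk_inl {G₁ : SimpleGraph α} {G₂ : SimpleGraph β} :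
    ∀ {u v : α ⊕ β} (w : (G₁ ⊕g G₂).Walk u v) (a : α), u = Sum.inl a →
      ∃ (b : α) (p : G₁.Walk a b), v = Sum.inl b ∧
        w.edges = p.edges.map (Sym2.map Sum.inl) ∧
        w.support = p.support.map Sum.inl := by
  intro u v w
  induction w with
  | nil => rintro a rfl; exact ⟨a, .nil, rfl, rfl, rfl⟩
  | @cons u x v h w ih =>
    rintro a rfl
    cases x with
    | inr c => simp [SimpleGraph.sum_adj] at h
    | inl a' =>
      have h' : G₁.Adj a a' := by simpa [SimpleGraph.sum_adj] using h
      obtain ⟨b, p, rfl, he, hs⟩ := ih a' rfl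
      exact ⟨b, .cons h' p, rfl, by simp [he], by simp [hs]⟩

lemma not_reachable_sum {G₁ : SimpleGraph α} {G₂ : SimpleGraph β} (a : α) (b : β) :
    ¬ (G₁ ⊕g G₂).Reachable (Sum.inl a) (Sum.inr b) := by
  rintro ⟨w⟩
  obtain ⟨b', p, h, -⟩ := walk_inl w a rfl
  exact absurd h (by simp)

lemma isAcyclic_sum_left {G₁ : SimpleGraph α} {G₂ : SimpleGraph β} (h₁ : G₁.IsAcyclic)
    (a : α) (c : (G₁ ⊕g G₂).Walk (Sum.inl a) (Sum.inl a)) : ¬ c.IsCycle := by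
  intro hc
  have h3 := hc.three_le_length
  obtain ⟨b, p, hb, he, hs⟩ := walk_inl c a rfl
  obtain rfl : b = a := by simpa using hb.symm
  refine h₁ p ?_
  rw [Walk.isCycle_def, Walk.isTrail_def] at hc ⊢
  obtain ⟨hnd, hne, htl⟩ := hc
  refine ⟨?_, ?_, ?_⟩
  · rw [he] at hnd; exact hnd.of_map _
  · rintro rfl
    rw [Walk.edges_nil, List.map_nil] at he
    have : c.length = 0 := by
      have := congrArg List.length he
      simpa [Walk.length_edges] using this
    omega
  · rw [hs] at htl
    refine List.Nodup.of_map (Sum.inl : α → α ⊕ β) ?_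
    rwa [List.map_tail]

lemma isAcyclic_sum {G₁ : SimpleGraph α} {G₂ : SimpleGraph β} (h₁ : G₁.IsAcyclic)
    (h₂ : G₂.IsAcyclic) : (G₁ ⊕g G₂).IsAcyclic := by
  intro v c hc
  cases v with
  | inl a => exact isAcyclic_sum_left h₁ a c hc
  | inr b =>
    have hc' := hc.map (f := (Iso.sumComm (G := G₁) (H := G₂)).toHom)
      (Iso.sumComm (G := G₁) (H := G₂)).injective
    exact isAcyclic_sum_left h₂ b _ hc'

lemma isTree_join {G₁ : SimpleGraph α} {G₂ : SimpleGraph β} (h₁ : G₁.IsTree) (h₂ : G₂.IsTree)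
    (r : α) (f : β) : ((G₁ ⊕g G₂) ⊔ edge (Sum.inl r) (Sum.inr f)).IsTree := by
  set J := (G₁ ⊕g G₂) ⊔ edge (Sum.inl r) (Sum.inr f) with hJ
  have hne : (Sum.inl r : α ⊕ β) ≠ Sum.inr f := by simp
  have hadj : J.Adj (Sum.inl r) (Sum.inr f) := by
    rw [hJ, sup_adj, edge_adj]
    exact Or.inr ⟨Or.inl ⟨rfl, rfl⟩, hne⟩
  have hreach : ∀ v : α ⊕ β, J.Reachable v (Sum.inl r) := by
    rintro (a | b)
    · exact ((h₁.isConnected.preconnected a r).map Embedding.sumInl.toHom).mono le_sup_left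
    · exact (((h₂.isConnected.preconnected b f).map Embedding.sumInr.toHom).mono
        le_sup_left).trans hadj.reachable.symm
  have hconn : J.Connected := by
    haveI : Nonempty (α ⊕ β) := ⟨Sum.inl r⟩
    exact Connected.mk fun u v => (hreach u).trans (hreach v).symm
  have hJdel : J \ fromEdgeSet {s(Sum.inl r, Sum.inr f)} = G₁ ⊕g G₂ := by
    ext u v
    rw [sdiff_adj, sup_adj, edge_adj, fromEdgeSet_adj]
    constructor
    · rintro ⟨h | ⟨h', hne2⟩, hnot⟩
      · exact h
      · exfalso
        apply hnot
        refine ⟨?_, hne2⟩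
        rcases h' with ⟨rfl, rfl⟩ | ⟨rfl, rfl⟩
        · exact Set.mem_singleton _
        · rw [Sym2.eq_swap]; exact Set.mem_singleton _
    · intro h
      refine ⟨Or.inl h, ?_⟩
      rintro ⟨hmem2, hne2⟩
      rw [Set.mem_singleton_iff, Sym2.eq_iff] at hmem2
      rcases hmem2 with ⟨rfl, rfl⟩ | ⟨rfl, rfl⟩
      · simp [SimpleGraph.sum_adj] at h
      · simp [SimpleGraph.sum_adj] at h
  have hbridge : J.IsBridge s(Sum.inl r, Sum.inr f) := by
    rw [isBridge_iff]
    exact by rw [deleteEdges, hJdel]; exact not_reachable_sum r f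
  have hacy : J.IsAcyclic := by
    intro v c hc
    have hmem : s(Sum.inl r, Sum.inr f) ∉ c.edges :=
      hbridge.notMem_edges_of_isCycle hc
    have hsubs : ∀ e ∈ c.edges, e ∈ (G₁ ⊕g G₂).edgeSet := by
      intro e
      induction e using Sym2.ind with
      | _ u v =>
        intro hce
        have heJ : J.Adj u v := c.adj_of_mem_edges hce
        have hne3 : s(u, v) ≠ s(Sum.inl r, Sum.inr f) := fun h => hmem (h ▸ hce)
        rcases heJ with h | h
        · exact h
        · rw [edge_adj] at h
          rcases h.1 with ⟨rfl, rfl⟩ | ⟨rfl, rfl⟩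
          · exact absurd rfl hne3
          · exact absurd Sym2.eq_swap hne3
    exact isAcyclic_sum h₁.2 h₂.2 (c.transfer _ hsubs) (hc.transfer _)
  exact ⟨hconn, hacy⟩


open SimpleGraph

section MatrixAux2

variable {m k : Type*} [Fintype m] [DecidableEq m] [Fintype k] [DecidableEq k]

def CongZ (A B : Matrix m m ℤ) : Prop :=
  ∃ P : Matrix m m ℤ, (P.det = 1 ∨ P.det = -1) ∧ B = Pᵀ * A * P

def IsTreeM (B : Matrix m m ℤ) : Prop :=
  B.IsSymm ∧ (∀ i j, i ≠ j → B i j = 0 ∨ B i j = 1) ∧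
    (SimpleGraph.fromRel fun i j => B i j = 1).IsTree

def TS (M : Matrix m m ℤ) : Prop :=
  ∃ (T : Matrix m m ℤ) (e f : m), CongZ M T ∧ IsTreeM T ∧ e ≠ f ∧
    (∀ x, x ≠ f → T x e = 0) ∧ T f e = 1

lemma CongZ.refl (A : Matrix m m ℤ) : CongZ A A :=
  ⟨1, Or.inl det_one, by simp⟩

lemma CongZ.trans {A B C : Matrix m m ℤ} (h1 : CongZ A B) (h2 : CongZ B C) : CongZ A C := by
  obtain ⟨P, hP, rfl⟩ := h1
  obtain ⟨Q, hQ, rfl⟩ := h2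
  refine ⟨P * Q, ?_, by rw [transpose_mul]; noncomm_ring⟩
  rcases hP with h | h <;> rcases hQ with h' | h' <;> simp [det_mul, h, h']

lemma CongZ.blocks {A A' : Matrix m m ℤ} {B B' : Matrix k k ℤ}
    (hA : CongZ A A') (hB : CongZ B B') :
    CongZ (Matrix.fromBlocks A 0 0 B) (Matrix.fromBlocks A' 0 0 B') := by
  obtain ⟨P, hP, rfl⟩ := hA
  obtain ⟨Q, hQ, rfl⟩ := hB
  refine ⟨Matrix.fromBlocks P 0 0 Q, ?_, ?_⟩
  · rw [det_fromBlocks_zero₂₁]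
    rcases hP with h | h <;> rcases hQ with h' | h' <;> simp [h, h']
  · simp [fromBlocks_transpose, fromBlocks_multiply]

lemma CongZ.reindexE {A B : Matrix m m ℤ} (σ : m ≃ k) (h : CongZ A B) :
    CongZ (Matrix.reindex σ σ A) (Matrix.reindex σ σ B) := by
  obtain ⟨P, hP, rfl⟩ := h
  refine ⟨Matrix.reindex σ σ P, by rwa [Matrix.det_reindex_self], ?_⟩
  simp [Matrix.reindex_apply, Matrix.transpose_submatrix, Matrix.submatrix_mul_equiv,
    Matrix.mul_assoc]

lemma isTree_of_iso {V W : Type*} {G : SimpleGraph V} {H : SimpleGraph W} (φ : G ≃g H)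
    (h : G.IsTree) : H.IsTree := by
  refine ⟨h.1.map φ.toHom φ.toEquiv.surjective, ?_⟩
  intro v c hc
  exact h.2 _ (hc.map (f := φ.symm.toHom) φ.symm.injective)

lemma isSymm_blocks {A : Matrix m m ℤ} {B : Matrix k k ℤ} (hA : A.IsSymm) (hB : B.IsSymm) :
    (Matrix.fromBlocks A 0 0 B).IsSymm := by
  rw [Matrix.IsSymm] at *
  rw [fromBlocks_transpose, hA, hB, transpose_zero]
  simp

lemma IsTreeM.reindexE {B : Matrix m m ℤ} (σ : m ≃ k) (h : IsTreeM B) :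
    IsTreeM (Matrix.reindex σ σ B) := by
  obtain ⟨hsymm, hod, htree⟩ := h
  refine ⟨?_, ?_, ?_⟩
  · rw [Matrix.IsSymm] at *
    rw [Matrix.reindex_apply, Matrix.transpose_submatrix, hsymm]
  · intro i j hij
    exact hod _ _ fun hs => hij (σ.symm.injective hs)
  · refine isTree_of_iso ?_ htree
    refine ⟨σ, ?_⟩
    intro a b
    simp [SimpleGraph.fromRel_adj, Matrix.reindex_apply, Matrix.submatrix_apply,
      σ.symm.injective.ne_iff]

lemma TS.reindexE {M : Matrix m m ℤ} (σ : m ≃ k) (h : TS M) : TS (Matrix.reindex σ σ M) := by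
  obtain ⟨T, e, f, hc, ht, hef, hcol, hfe⟩ := h
  refine ⟨Matrix.reindex σ σ T, σ e, σ f, hc.reindexE σ, ht.reindexE σ,
    fun hs => hef (σ.injective hs), ?_, ?_⟩
  · intro x hx
    simpa using hcol (σ.symm x) fun h' => hx (by rw [← σ.apply_symm_apply x, h'])
  · simp [Matrix.reindex_apply]; exact hfe

lemma TS.of_congZ {M M' : Matrix m m ℤ} (h : CongZ M M') (ht : TS M') : TS M := by
  obtain ⟨T, e, f, hc, rest⟩ := ht
  exact ⟨T, e, f, h.trans hc, rest⟩

lemma isAcyclic_card_le_two {V : Type*} [Fintype V] (h : Fintype.card V ≤ 2)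
    (G : SimpleGraph V) : G.IsAcyclic := by
  intro v c hc
  have h3 := hc.three_le_length
  have hnd : c.support.tail.Nodup := hc.2
  have hlen := hnd.length_le_card
  rw [List.length_tail, Walk.length_support] at hlen
  omega

end MatrixAux2


section Core
variable {m k : Type*} [Fintype m] [DecidableEq m] [Fintype k] [DecidableEq k]

lemma core {A' : Matrix m m ℤ} {T : Matrix k k ℤ} (hA : IsTreeM A') (hT : IsTreeM T)
    (e f : k) (hef : e ≠ f) (hcol : ∀ x, x ≠ f → T x e = 0) (hfe : T f e = 1) (r : m) :
    TS (Matrix.fromBlocks A' 0 0 T) := by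
  classical
  set M : Matrix (m ⊕ k) (m ⊕ k) ℤ := Matrix.fromBlocks A' 0 0 T with hM
  have hMsymm : M.IsSymm := isSymm_blocks hA.1 hT.1
  have hMcol : ∀ x, M x (Sum.inr e) = if x = Sum.inr f then 1 else 0 := by
    rintro (a | y)
    · simp [hM]
    · by_cases hy : y = f
      · subst hy; simp [hM, hfe]
      · simp [hM, hy, hcol y hy]
  have hMrow : ∀ x, M (Sum.inr e) x = if x = Sum.inr f then 1 else 0 := by
    intro x
    rw [hMsymm.apply x (Sum.inr e), hMcol]
  have hee : M (Sum.inr e) (Sum.inr e) = 0 := by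
    rw [hMrow]; simp [hef]
  set T' : Matrix (m ⊕ k) (m ⊕ k) ℤ := Matrix.of fun i j => M i j +
      ((if j = Sum.inl r then (if i = Sum.inr f then 1 else 0) else 0) +
       (if i = Sum.inl r then (if j = Sum.inr f then 1 else 0) else 0)) with hT'
  have hT'app : ∀ i j, T' i j = M i j +
      ((if j = Sum.inl r then (if i = Sum.inr f then 1 else 0) else 0) +
       (if i = Sum.inl r then (if j = Sum.inr f then 1 else 0) else 0)) := fun i j => rfl
  -- congruence computation
  set E : Matrix (m ⊕ k) (m ⊕ k) ℤ := Matrix.single (Sum.inr e) (Sum.inl r) 1 with hE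
  set E' : Matrix (m ⊕ k) (m ⊕ k) ℤ := Matrix.single (Sum.inl r) (Sum.inr e) 1 with hE'
  have hME : ∀ (N : Matrix (m ⊕ k) (m ⊕ k) ℤ) i j,
      (N * E) i j = if j = Sum.inl r then N i (Sum.inr e) else 0 := by
    intro N i j
    by_cases hj : j = Sum.inl r
    · subst hj
      rw [if_pos rfl, hE]
      rw [Matrix.mul_single_apply_same]
      ring
    · rw [if_neg hj, hE, Matrix.mul_single_apply_of_ne (hbj := hj)]

  have hE'M : ∀ (N : Matrix (m ⊕ k) (m ⊕ k) ℤ) i j,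
      (E' * N) i j = if i = Sum.inl r then N (Sum.inr e) j else 0 := by
    intro N i j
    by_cases hi : i = Sum.inl r
    · subst hi
      rw [if_pos rfl, hE']
      rw [Matrix.single_mul_apply_same]
      ring
    · rw [if_neg hi, hE', Matrix.single_mul_apply_of_ne (h := hi)]
  have hcong : CongZ M T' := by
    refine ⟨1 + E, ?_, ?_⟩
    · left
      have : (1 + E : Matrix (m ⊕ k) (m ⊕ k) ℤ) =
          Matrix.transvection (Sum.inr e) (Sum.inl r) 1 := rfl
      rw [this]
      exact Matrix.det_transvection_of_ne _ _ (by simp) 1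
    · have hPT : (1 + E)ᵀ = 1 + E' := by
        rw [transpose_add, transpose_one, hE, hE']
        congr 1
        ext a b
        simp only [Matrix.transpose_apply, Matrix.single, Matrix.of_apply]
        by_cases h1 : a = Sum.inl r <;> by_cases h2 : b = Sum.inr e <;>
          simp [h1, h2, and_comm, eq_comm]
      rw [hPT]
      ext i j
      simp only [Matrix.mul_add, Matrix.add_mul, Matrix.one_mul, Matrix.mul_one,
        Matrix.add_apply]
      rw [hT'app, hME, hE'M, hME, hE'M, hMcol i, hMrow j, hee]
      simp only [ite_self]
      ring
  -- symmetry of T'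
  have hT'symm : T'.IsSymm := by
    rw [Matrix.IsSymm]
    ext i j
    rw [Matrix.transpose_apply, hT'app, hT'app, ← hMsymm.apply j i]
    ring
  -- entries of T' in cases
  have hll : ∀ a b, T' (Sum.inl a) (Sum.inl b) = A' a b := by
    intro a b; rw [hT'app]; simp [hM]
  have hrr : ∀ y z, T' (Sum.inr y) (Sum.inr z) = T y z := by
    intro y z; rw [hT'app]; simp [hM]
  have hlr : ∀ a z, T' (Sum.inl a) (Sum.inr z) =
      if a = r ∧ z = f then 1 else 0 := by
    intro a z
    rw [hT'app]
    simp only [hM, Matrix.fromBlocks_apply₁₂, Matrix.zero_apply, zero_add]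
    by_cases h1 : a = r <;> by_cases h2 : z = f <;> simp [h1, h2]
  have hrl : ∀ y b, T' (Sum.inr y) (Sum.inl b) =
      if y = f ∧ b = r then 1 else 0 := by
    intro y b
    rw [hT'app]
    simp only [hM, Matrix.fromBlocks_apply₂₁, Matrix.zero_apply, zero_add]
    by_cases h1 : y = f <;> by_cases h2 : b = r <;> simp [h1, h2]
  -- off diagonal
  have hod : ∀ i j, i ≠ j → T' i j = 0 ∨ T' i j = 1 := by
    rintro (a | y) (b | z) hij
    · rw [hll]; exact hA.2.1 a b (fun h => hij (by rw [h]))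
    · rw [hlr]; by_cases h : a = r ∧ z = f <;> simp [h]
    · rw [hrl]; by_cases h : y = f ∧ b = r <;> simp [h]
    · rw [hrr]; exact hT.2.1 y z (fun h => hij (by rw [h]))
  -- graph
  have hgraph : (SimpleGraph.fromRel fun i j => T' i j = 1) =
      ((SimpleGraph.fromRel fun i j => A' i j = 1) ⊕g
        (SimpleGraph.fromRel fun i j => T i j = 1)) ⊔
        SimpleGraph.edge (Sum.inl r) (Sum.inr f) := by
    ext i j
    rw [SimpleGraph.fromRel_adj, sup_adj, edge_adj]
    rcases i with a | y <;> rcases j with b | z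
    · rw [hll, hll]
      simp only [SimpleGraph.sum_adj, SimpleGraph.fromRel_adj]
      constructor
      · rintro ⟨hne, h⟩
        exact Or.inl ⟨fun h' => hne (by rw [h']), h⟩
      · rintro (⟨hne, h⟩ | ⟨(⟨_, h⟩ | ⟨h, _⟩), _⟩)
        · exact ⟨fun h' => hne (Sum.inl.inj h'), h⟩
        · exact absurd h (by simp)
        · exact absurd h (by simp)
    · rw [hlr, hrl]
      constructor
      · rintro ⟨hne, h | h⟩
        · rw [ite_eq_iff] at h
          rcases h with ⟨⟨rfl, rfl⟩, -⟩ | ⟨-, h⟩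
          · exact Or.inr ⟨Or.inl ⟨rfl, rfl⟩, hne⟩
          · exact absurd h (by norm_num)
        · rw [ite_eq_iff] at h
          rcases h with ⟨⟨rfl, rfl⟩, -⟩ | ⟨-, h⟩
          · exact Or.inr ⟨Or.inl ⟨rfl, rfl⟩, hne⟩
          · exact absurd h (by norm_num)
      · rintro (h | ⟨(⟨ha, hz⟩ | ⟨ha, _⟩), hne⟩)
        · exact absurd h (by simp [SimpleGraph.sum_adj])
        · obtain rfl : a = r := by exact Sum.inl.inj ha
          obtain rfl : z = f := by exact Sum.inr.inj hz
          exact ⟨hne, Or.inl (by simp)⟩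
        · exact absurd ha (by simp)
    · rw [hrl, hlr]
      constructor
      · rintro ⟨hne, h | h⟩
        · rw [ite_eq_iff] at h
          rcases h with ⟨⟨rfl, rfl⟩, -⟩ | ⟨-, h⟩
          · exact Or.inr ⟨Or.inr ⟨rfl, rfl⟩, hne⟩
          · exact absurd h (by norm_num)
        · rw [ite_eq_iff] at h
          rcases h with ⟨⟨rfl, rfl⟩, -⟩ | ⟨-, h⟩
          · exact Or.inr ⟨Or.inr ⟨rfl, rfl⟩, hne⟩
          · exact absurd h (by norm_num)
      · rintro (h | ⟨(⟨ha, _⟩ | ⟨hy, hb⟩), hne⟩)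
        · exact absurd h (by simp [SimpleGraph.sum_adj])
        · exact absurd ha (by simp)
        · obtain rfl : y = f := by exact Sum.inr.inj hy
          obtain rfl : b = r := by exact Sum.inl.inj hb
          exact ⟨hne, Or.inl (by simp)⟩
    · rw [hrr, hrr]
      simp only [SimpleGraph.sum_adj, SimpleGraph.fromRel_adj]
      constructor
      · rintro ⟨hne, h⟩
        exact Or.inl ⟨fun h' => hne (by rw [h']), h⟩
      · rintro (⟨hne, h⟩ | ⟨(⟨h, _⟩ | ⟨_, h⟩), _⟩)
        · exact ⟨fun h' => hne (Sum.inr.inj h'), h⟩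
        · exact absurd h (by simp)
        · exact absurd h (by simp)
  have htree : (SimpleGraph.fromRel fun i j => T' i j = 1).IsTree := by
    rw [hgraph]
    exact isTree_join hA.2.2 hT.2.2 r f
  -- column invariant
  have hcole : ∀ x, T' x (Sum.inr e) = M x (Sum.inr e) := by
    intro x
    rw [hT'app]
    have h1 : (Sum.inr e : m ⊕ k) ≠ Sum.inl r := by simp
    have h2 : (Sum.inr e : m ⊕ k) ≠ Sum.inr f := by simp [hef]
    simp [h1, h2]
  refine ⟨T', Sum.inr e, Sum.inr f, hcong, ⟨hT'symm, hod, htree⟩, by simp [hef], ?_, ?_⟩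
  · intro x hx
    rw [hcole, hMcol, if_neg hx]
  · rw [hcole, hMcol, if_pos rfl]


end Core

lemma baseTS {ι : Type*} [Fintype ι] [DecidableEq ι] [IsEmpty ι] (Z : Matrix ι ι ℤ) :
    TS (Matrix.fromBlocks Z 0 0 !![(0 : ℤ), 1; 1, 0]) := by
  set Hm : Matrix (Fin 2) (Fin 2) ℤ := !![(0 : ℤ), 1; 1, 0] with hHm
  have hent : ∀ a b, Matrix.fromBlocks Z 0 0 Hm (Sum.inr a) (Sum.inr b) = Hm a b := by
    intro a b; simp
  have h01 : Hm 0 1 = 1 := by norm_num [hHm]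
  have h10 : Hm 1 0 = 1 := by norm_num [hHm]
  have h00 : Hm 0 0 = 0 := by norm_num [hHm]
  have h11 : Hm 1 1 = 0 := by norm_num [hHm]
  refine ⟨Matrix.fromBlocks Z 0 0 Hm, Sum.inr 0, Sum.inr 1, CongZ.refl _,
    ⟨?_, ?_, ?_⟩, by simp, ?_, ?_⟩
  · refine Matrix.IsSymm.ext fun i j => ?_
    cases i with
    | inl a => exact isEmptyElim a
    | inr a => cases j with
      | inl b => exact isEmptyElim b
      | inr b =>
        rw [hent, hent]
        fin_cases a <;> fin_cases b <;> simp [h01, h10, h00, h11]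
  · rintro (a | a) (b | b) hij
    · exact isEmptyElim a
    · exact isEmptyElim a
    · exact isEmptyElim b
    · rw [hent]
      fin_cases a <;> fin_cases b <;> simp [h01, h10, h00, h11]
  · have hadj : (SimpleGraph.fromRel fun i j =>
        Matrix.fromBlocks Z 0 0 Hm i j = 1).Adj (Sum.inr 0) (Sum.inr 1) := by
      rw [SimpleGraph.fromRel_adj]
      refine ⟨by simp, Or.inl ?_⟩
      rw [hent]; exact h01
    refine ⟨⟨?_⟩, isAcyclic_card_le_two (by simp) _⟩
    · rintro (a | a) (b | b)
      · exact isEmptyElim a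
      · exact isEmptyElim a
      · exact isEmptyElim b
      · fin_cases a <;> fin_cases b
        · exact Reachable.refl _
        · exact hadj.reachable
        · exact hadj.symm.reachable
        · exact Reachable.refl _
  · rintro (a | a) hx
    · exact isEmptyElim a
    · rw [hent]
      fin_cases a
      · exact h00
      · simp at hx
  · rw [hent]; exact h10

def stepEquiv (n : ℕ) (A : Matrix (Fin n) (Fin n) ℤ)
    (t : List ((n : ℕ) × Matrix (Fin n) (Fin n) ℤ)) :
    (Fin n ⊕ (Fin (totalSize t) ⊕ Fin 2)) ≃ (Fin (totalSize (⟨n, A⟩ :: t)) ⊕ Fin 2) :=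
  (Equiv.sumAssoc (Fin n) (Fin (totalSize t)) (Fin 2)).symm.trans
    (Equiv.sumCongr (finSumFinEquiv.trans (finCongr (by simp [totalSize])))
      (Equiv.refl (Fin 2)))

lemma reindex_reindex {a b c : Type*} (e1 : a ≃ b) (e2 : b ≃ c) (M : Matrix a a ℤ) :
    Matrix.reindex e2 e2 (Matrix.reindex e1 e1 M) = Matrix.reindex (e1.trans e2) (e1.trans e2) M := by
  ext i j
  simp [Matrix.reindex_apply, Matrix.submatrix_apply]

lemma fromBlocks_reindex {a b c : Type*} (σ : a ≃ b) (C : Matrix a a ℤ) (D : Matrix c c ℤ) :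
    Matrix.fromBlocks (Matrix.reindex σ σ C) 0 0 D =
      Matrix.reindex (σ.sumCongr (Equiv.refl c)) (σ.sumCongr (Equiv.refl c))
        (Matrix.fromBlocks C 0 0 D) := by
  ext (i | i) (j | j) <;> simp [Matrix.reindex_apply, Matrix.submatrix_apply]

lemma fromBlocks_assoc {a b c : Type*} (A : Matrix a a ℤ) (B : Matrix b b ℤ) (C : Matrix c c ℤ) :
    Matrix.fromBlocks (Matrix.fromBlocks A 0 0 B) 0 0 C =
      Matrix.reindex (Equiv.sumAssoc a b c).symm (Equiv.sumAssoc a b c).symm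
        (Matrix.fromBlocks A 0 0 (Matrix.fromBlocks B 0 0 C)) := by
  ext ((i | i) | i) ((j | j) | j) <;> simp [Matrix.reindex_apply, Matrix.submatrix_apply]

lemma step_eq (n : ℕ) (A : Matrix (Fin n) (Fin n) ℤ)
    (t : List ((n : ℕ) × Matrix (Fin n) (Fin n) ℤ)) :
    Matrix.fromBlocks (blockSum (⟨n, A⟩ :: t)) 0 0 !![(0 : ℤ), 1; 1, 0] =
      Matrix.reindex (stepEquiv n A t) (stepEquiv n A t)
        (Matrix.fromBlocks A 0 0
          (Matrix.fromBlocks (blockSum t) 0 0 !![(0 : ℤ), 1; 1, 0])) := by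
  have h1 : blockSum (⟨n, A⟩ :: t) =
      Matrix.reindex (finSumFinEquiv.trans (finCongr (by simp [totalSize])))
        (finSumFinEquiv.trans (finCongr (by simp [totalSize])))
        (Matrix.fromBlocks A 0 0 (blockSum t)) := by
    rw [blockSum, reindex_reindex]
  rw [h1, fromBlocks_reindex, fromBlocks_assoc, reindex_reindex]
  rfl


lemma mainTS : ∀ (l : List ((n : ℕ) × Matrix (Fin n) (Fin n) ℤ)),
    (∀ p ∈ l, IsTreelike p.2) →
    TS (Matrix.fromBlocks (blockSum l) 0 0 !![(0 : ℤ), 1; 1, 0]) := by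
  intro l
  induction l with
  | nil =>
    intro _
    haveI : IsEmpty (Fin (totalSize ([] : List ((n : ℕ) × Matrix (Fin n) (Fin n) ℤ)))) :=
      inferInstanceAs (IsEmpty (Fin 0))
    exact baseTS _
  | cons p t ih =>
    obtain ⟨n, A⟩ := p
    intro hA
    obtain ⟨T, e, f, hc, ht, hef, hcolv, hfe⟩ :=
      ih fun q hq => hA q (List.mem_cons_of_mem _ hq)
    obtain ⟨BA, hBA, hABA⟩ := hA ⟨n, A⟩ List.mem_cons_self
    obtain ⟨r⟩ : Nonempty (Fin n) := hBA.2.2.isConnected.nonempty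
    have hcong1 : CongZ (Matrix.fromBlocks A 0 0
        (Matrix.fromBlocks (blockSum t) 0 0 !![(0 : ℤ), 1; 1, 0]))
        (Matrix.fromBlocks BA 0 0 T) :=
      CongZ.blocks hABA hc
    have hcore : TS (Matrix.fromBlocks BA 0 0 T) :=
      core hBA ht e f hef hcolv hfe r
    rw [step_eq]
    exact (hcore.of_congZ hcong1).reindexE (stepEquiv n A t)

end TreeAux

/-- Lemma 3.6: for treelike symmetric integer matrices `A₁, …, A_m` (`m ≥ 1`), the
block-diagonal sum `A₁ ⊕ ⋯ ⊕ A_m ⊕ H` is treelike, where `H = !![0,1;1,0]` is the matrix of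
the standard hyperbolic form. -/
theorem stmt_11 (l : List ((n : ℕ) × Matrix (Fin n) (Fin n) ℤ)) (hl : l ≠ [])
    (hA : ∀ p ∈ l, IsTreelike p.2) :
    IsTreelike
      (Matrix.reindex finSumFinEquiv finSumFinEquiv
        (Matrix.fromBlocks (blockSum l) 0 0 !![(0 : ℤ), 1; 1, 0])) := by
  obtain ⟨T, e, f, hc, ht, -, -, -⟩ := TreeAux.mainTS l hA
  exact ⟨Matrix.reindex finSumFinEquiv finSumFinEquiv T,
    ht.reindexE finSumFinEquiv, hc.reindexE finSumFinEquiv⟩
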